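/- Let A = [ω_{ij}] be an n×n symmetric real matrix with zero diagonal, and let ω_1 ≥ ω_2 ≥ ⋯ ≥ ω_{n²−n} be the decreasing order of the n²−n off-diagonal entries (ω_{ij})_{i≠j}. Then for every k ∈ [n−1] and every orthonormal family u_1, …, u_k of vectors in ℝ^n each orthogonal to the all-ones vector, Σ_{i=1}^k u_iᵀ L_A u_i ≤ Σ_{i=1}^{kn} ω_i. Equivalently, the sum of the k largest Laplacian eigenvalues of A on the orthogonal complement of the all-ones vector is at most Σ_{i=1}^{kn} ω_i. -/

import Mathlib

open Matrix

/-- The Laplacian matrix of a weighted graph with (symmetric, zero-diagonal)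
adjacency matrix `A`: `L_A = D - A` where `D` is the diagonal matrix of row sums. -/
def lap {n : ℕ} (A : Matrix (Fin n) (Fin n) ℝ) : Matrix (Fin n) (Fin n) ℝ :=
  Matrix.diagonal (fun i => ∑ j, A i j) - A

/-- Bessel's inequality for an orthonormal family of vectors in `Fin n → ℝ`. -/
lemma bessel {k n : ℕ} (u : Fin k → Fin n → ℝ)
    (horth : ∀ i j, u i ⬝ᵥ u j = if i = j then 1 else 0) (x : Fin n → ℝ) :
    ∑ t, (∑ l, u t l * x l) ^ 2 ≤ ∑ l, x l * x l := by
  have horth' : ∀ i j, ∑ l, u i l * u j l = if i = j then 1 else 0 := by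
    intro i j; simpa [dotProduct] using horth i j
  set c : Fin k → ℝ := fun t => ∑ l, u t l * x l with hc
  set s : Fin n → ℝ := fun l => ∑ t, c t * u t l with hs
  have key : (0:ℝ) ≤ ∑ l, (x l - s l) ^ 2 :=
    Finset.sum_nonneg fun _ _ => sq_nonneg _
  have hA : ∑ l, x l * s l = ∑ t, c t ^ 2 := by
    simp only [hs, Finset.mul_sum]
    rw [Finset.sum_comm]
    refine Finset.sum_congr rfl fun t _ => ?_
    have h1 : ∑ l, x l * (c t * u t l) = c t * ∑ l, u t l * x l := by
      rw [Finset.mul_sum]; exact Finset.sum_congr rfl fun l _ => by ring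
    rw [h1, show (∑ l, u t l * x l) = c t from rfl]; ring
  have hB : ∑ l, s l * s l = ∑ t, c t ^ 2 := by
    have h1 : ∀ l, s l * s l = ∑ t, ∑ r, c t * c r * (u t l * u r l) := by
      intro l
      rw [hs, Finset.sum_mul_sum]
      exact Finset.sum_congr rfl fun t _ => Finset.sum_congr rfl fun r _ => by ring
    simp_rw [h1]
    rw [Finset.sum_comm]
    refine Finset.sum_congr rfl fun t _ => ?_
    rw [Finset.sum_comm]
    have h2 : ∀ r, ∑ l, c t * c r * (u t l * u r l) = c t * c r * ∑ l, u t l * u r l :=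
      fun r => (Finset.mul_sum _ _ _).symm
    simp_rw [h2, horth']
    rw [Finset.sum_eq_single t]
    · simp [pow_two]
    · intro r _ hrt; simp [Ne.symm hrt]
    · simp
  have expand : ∑ l, (x l - s l) ^ 2
      = ∑ l, x l * x l - 2 * ∑ l, x l * s l + ∑ l, s l * s l := by
    have h := Finset.sum_congr rfl fun l (_ : l ∈ (Finset.univ : Finset (Fin n))) =>
      show (x l - s l) ^ 2 = x l * x l - 2 * (x l * s l) + s l * s l by ring
    rw [h, Finset.sum_add_distrib, Finset.sum_sub_distrib, Finset.mul_sum]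
  rw [expand, hA, hB] at key
  linarith

/-- If `v` takes values in `[0,1]` and sums to `K`, then `∑ ω i * v i` is at most
the sum of the `K` largest values of the antitone function `ω`. -/
lemma select_bound {m K : ℕ} (hK1 : 1 ≤ K) (hKm : K ≤ m) (ω v : Fin m → ℝ)
    (hmono : Antitone ω) (h0 : ∀ i, 0 ≤ v i) (h1 : ∀ i, v i ≤ 1)
    (hsum : ∑ i, v i = (K : ℝ)) :
    ∑ i, ω i * v i ≤ ∑ i ∈ Finset.univ.filter (fun i : Fin m => (i : ℕ) < K), ω i := by
  set F := Finset.univ.filter (fun i : Fin m => (i : ℕ) < K) with hF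
  set G := Finset.univ.filter (fun i : Fin m => ¬ ((i : ℕ) < K)) with hG
  have hKm' : K - 1 < m := by omega
  set t := ω ⟨K - 1, hKm'⟩ with ht
  have hcard : F.card = K := by
    have hFeq : F = Finset.map (Fin.castLEEmb hKm) Finset.univ := by
      ext i
      simp only [hF, Finset.mem_filter, Finset.mem_map, Finset.mem_univ, true_and]
      constructor
      · intro h
        exact ⟨⟨(i : ℕ), h⟩, by ext; simp [Fin.castLEEmb, Fin.castLE]⟩
      · rintro ⟨j, rfl⟩
        exact j.isLt
    rw [hFeq, Finset.card_map, Finset.card_univ, Fintype.card_fin]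
  have hsplitω : ∑ i, ω i * v i = ∑ i ∈ F, ω i * v i + ∑ i ∈ G, ω i * v i :=
    (Finset.sum_filter_add_sum_filter_not _ _ _).symm
  have hsplitv : ∑ i, v i = ∑ i ∈ F, v i + ∑ i ∈ G, v i :=
    (Finset.sum_filter_add_sum_filter_not _ _ _).symm
  have e1 : ∑ i ∈ F, ω i * v i ≤ ∑ i ∈ F, (t * v i + (ω i - t)) := by
    refine Finset.sum_le_sum fun i hi => ?_
    have hge : t ≤ ω i := by
      refine hmono ?_
      simp only [hF, Finset.mem_filter, Finset.mem_univ, true_and] at hi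
      have hd : ((⟨K - 1, hKm'⟩ : Fin m) : ℕ) = K - 1 := rfl
      exact Fin.le_def.mpr (by omega)
    nlinarith [h0 i, h1 i]
  have e2 : ∑ i ∈ G, ω i * v i ≤ ∑ i ∈ G, t * v i := by
    refine Finset.sum_le_sum fun i hi => ?_
    have hle : ω i ≤ t := by
      refine hmono ?_
      simp only [hG, Finset.mem_filter, Finset.mem_univ, true_and] at hi
      have hd : ((⟨K - 1, hKm'⟩ : Fin m) : ℕ) = K - 1 := rfl
      exact Fin.le_def.mpr (by omega)
    exact mul_le_mul_of_nonneg_right hle (h0 i)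
  have e3 : ∑ i ∈ F, (t * v i + (ω i - t)) = t * ∑ i ∈ F, v i + ∑ i ∈ F, ω i - K * t := by
    rw [Finset.sum_add_distrib, Finset.sum_sub_distrib, Finset.sum_const, hcard,
      Finset.mul_sum, nsmul_eq_mul]
    ring
  have e4 : ∑ i ∈ G, t * v i = t * ∑ i ∈ G, v i := (Finset.mul_sum _ _ _).symm
  rw [hsum] at hsplitv
  rw [hsplitω]
  calc ∑ i ∈ F, ω i * v i + ∑ i ∈ G, ω i * v i
      ≤ (t * ∑ i ∈ F, v i + ∑ i ∈ F, ω i - K * t) + t * ∑ i ∈ G, v i := by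
        rw [← e3, ← e4]; exact add_le_add e1 e2
    _ = ∑ i ∈ F, ω i := by
        have h5 : (t : ℝ) * (↑K) = t * (∑ i ∈ F, v i + ∑ i ∈ G, v i) := by rw [← hsplitv]
        nlinarith [h5]

theorem sum_k_largest_lap_eigenvalues_le_sum_kn_largest_weights {n : ℕ}
    (A : Matrix (Fin n) (Fin n) ℝ) (hsym : A.IsSymm) (hdiag : ∀ i, A i i = 0)
    -- `ω` lists the off-diagonal entries of `A` in decreasing order
    (ω : Fin (n * n - n) → ℝ) (hmono : Antitone ω)
    (e : Fin (n * n - n) ≃ {p : Fin n × Fin n // p.1 ≠ p.2})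
    (hω : ∀ i, ω i = A (e i).1.1 (e i).1.2)
    (k : ℕ) (hk1 : 1 ≤ k) (hk2 : k ≤ n - 1)
    (u : Fin k → Fin n → ℝ)
    (horth : ∀ i j, u i ⬝ᵥ u j = if i = j then 1 else 0)
    (hones : ∀ i, ∑ l, u i l = 0) :
    ∑ i, u i ⬝ᵥ (lap A).mulVec (u i) ≤
      ∑ i ∈ Finset.univ.filter (fun i : Fin (n * n - n) => (i : ℕ) < k * n), ω i := by
  have hn2 : 2 ≤ n := by
    rcases Nat.lt_or_ge n 2 with h | h
    · interval_cases n <;> omega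
    · exact h
  have hsymm : ∀ i j, A j i = A i j := fun i j => by
    conv_lhs => rw [← hsym]
    rfl
  set P : Fin n → ℝ := fun i => ∑ t, u t i * u t i with hP
  set Q : Fin n → Fin n → ℝ := fun i j => ∑ t, u t i * u t j with hQ
  set q : Fin n → Fin n → ℝ := fun i j => (P i + P j - 2 * Q i j) / 2 with hq
  have hQsymm : ∀ i j, Q j i = Q i j := fun i j =>
    Finset.sum_congr rfl fun t _ => by ring
  have hqsq : ∀ i j, q i j = (∑ t, (u t i - u t j) ^ 2) / 2 := by
    intro i j
    have h : ∑ t, (u t i - u t j) ^ 2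
        = ∑ t, (u t i * u t i) + ∑ t, (u t j * u t j) - 2 * ∑ t, (u t i * u t j) := by
      rw [← Finset.sum_add_distrib, Finset.mul_sum, ← Finset.sum_sub_distrib]
      exact Finset.sum_congr rfl fun t _ => by ring
    rw [hq]; dsimp only; rw [h]
  -- normalize u t : unit norm and zero sum
  have hnorm : ∀ t, ∑ l, u t l * u t l = 1 := by
    intro t
    have := horth t t
    simpa [dotProduct] using this
  -- Step A : the quadratic form
  have hL : ∀ x : Fin n → ℝ, x ⬝ᵥ (lap A).mulVec x
      = ∑ i, ∑ j, A i j * (x i * x i - x i * x j) := by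
    intro x
    simp only [dotProduct, mulVec, lap, Matrix.sub_apply, diagonal_apply, dotProduct]
    refine Finset.sum_congr rfl fun i _ => ?_
    have h1 : ∑ j, ((if i = j then ∑ j', A i j' else 0) - A i j) * x j
        = (∑ j', A i j') * x i - ∑ j, A i j * x j := by
      simp_rw [sub_mul]
      rw [Finset.sum_sub_distrib]
      congr 1
      rw [Finset.sum_eq_single i]
      · simp
      · intro j _ hj; simp [Ne.symm hj]
      · simp
    have ha : x i * ((∑ j, A i j) * x i) = ∑ j, A i j * (x i * x i) := by
      rw [Finset.sum_mul, Finset.mul_sum]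
      exact Finset.sum_congr rfl fun j _ => by ring
    have hb : x i * (∑ j, A i j * x j) = ∑ j, A i j * (x i * x j) := by
      rw [Finset.mul_sum]
      exact Finset.sum_congr rfl fun j _ => by ring
    rw [h1, mul_sub, ha, hb, ← Finset.sum_sub_distrib]
    exact Finset.sum_congr rfl fun j _ => by ring
  -- Step B : sum over t
  have hS : ∑ t, u t ⬝ᵥ (lap A).mulVec (u t) = ∑ i, ∑ j, A i j * (P i - Q i j) := by
    simp_rw [hL]
    rw [Finset.sum_comm]
    refine Finset.sum_congr rfl fun i _ => ?_
    rw [Finset.sum_comm]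
    refine Finset.sum_congr rfl fun j _ => ?_
    rw [mul_sub, Finset.mul_sum, Finset.mul_sum, ← Finset.sum_sub_distrib]
    exact Finset.sum_congr rfl fun t _ => by ring
  -- Step C : symmetrization
  have hswap : ∑ i, ∑ j, A i j * (P i - Q i j) = ∑ i, ∑ j, A i j * (P j - Q i j) := by
    rw [Finset.sum_comm]
    refine Finset.sum_congr rfl fun j _ => Finset.sum_congr rfl fun i _ => ?_
    rw [hsymm j i, hQsymm j i]
  have hSq : ∑ t, u t ⬝ᵥ (lap A).mulVec (u t) = ∑ i, ∑ j, A i j * q i j := by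
    have h2 : ∑ i, ∑ j, A i j * q i j
        = (∑ i, ∑ j, A i j * (P i - Q i j) + ∑ i, ∑ j, A i j * (P j - Q i j)) / 2 := by
      rw [← Finset.sum_add_distrib]
      rw [Finset.sum_div]
      refine Finset.sum_congr rfl fun i _ => ?_
      rw [← Finset.sum_add_distrib, Finset.sum_div]
      refine Finset.sum_congr rfl fun j _ => ?_
      rw [hq]; dsimp only; ring
    rw [hS, h2, ← hswap]; ring
  -- q is zero on the diagonal
  have hqdiag : ∀ i, q i i = 0 := by
    intro i
    rw [hq]; dsimp only
    rw [show Q i i = P i from rfl]; ring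
  -- bounds on q
  have hq0 : ∀ i j, 0 ≤ q i j := by
    intro i j
    rw [hqsq]
    have : (0:ℝ) ≤ ∑ t, (u t i - u t j) ^ 2 := Finset.sum_nonneg fun _ _ => sq_nonneg _
    linarith
  have hq1 : ∀ i j, i ≠ j → q i j ≤ 1 := by
    intro a b hab
    rw [hqsq]
    set x : Fin n → ℝ := fun l => (if l = a then 1 else 0) - (if l = b then 1 else 0) with hx
    have hdot : ∀ t, ∑ l, u t l * x l = u t a - u t b := by
      intro t
      rw [hx]
      have h : ∀ l, u t l * ((if l = a then (1:ℝ) else 0) - (if l = b then 1 else 0))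
          = (if l = a then u t l else 0) - (if l = b then u t l else 0) := by
        intro l; split_ifs <;> ring
      simp_rw [h]
      rw [Finset.sum_sub_distrib, Finset.sum_ite_eq' Finset.univ a, Finset.sum_ite_eq' Finset.univ b]
      simp
    have hxx : ∑ l, x l * x l = 2 := by
      rw [hx]
      have h : ∀ l, ((if l = a then (1:ℝ) else 0) - (if l = b then 1 else 0))
            * ((if l = a then (1:ℝ) else 0) - (if l = b then 1 else 0))
          = (if l = a then 1 else 0) + (if l = b then 1 else 0) := by
        intro l
        rcases eq_or_ne l a with rfl | hla <;> rcases eq_or_ne l b with rfl | hlb <;>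
          simp_all <;> ring
      simp_rw [h]
      rw [Finset.sum_add_distrib, Finset.sum_ite_eq' Finset.univ a, Finset.sum_ite_eq' Finset.univ b]
      norm_num
    have hb := bessel u horth x
    rw [hxx] at hb
    have h2 : ∑ t, (u t a - u t b) ^ 2 ≤ 2 := by
      calc ∑ t, (u t a - u t b) ^ 2 = ∑ t, (∑ l, u t l * x l) ^ 2 :=
            Finset.sum_congr rfl fun t _ => by rw [hdot]
        _ ≤ 2 := hb
    linarith
  -- total sums
  have hPsum : ∑ i, P i = (k : ℝ) := by
    rw [hP]
    dsimp only
    rw [Finset.sum_comm]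
    simp_rw [hnorm]
    simp
  have hQsum : ∑ i, ∑ j, Q i j = 0 := by
    rw [hQ]
    dsimp only
    rw [Finset.sum_comm]
    have h : ∀ j, ∑ i, ∑ t, u t i * u t j = ∑ t, (∑ i, u t i) * u t j := by
      intro j
      rw [Finset.sum_comm]
      exact Finset.sum_congr rfl fun t _ => (Finset.sum_mul _ _ _).symm
    simp_rw [h, hones]
    simp
  have hqtotal : ∑ i, ∑ j, q i j = (k : ℝ) * n := by
    have h : ∀ i, ∑ j, q i j = ((n:ℝ) * P i + ∑ j, P j - 2 * ∑ j, Q i j) / 2 := by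
      intro i
      have h0 : ∀ j, q i j = (P i + P j - 2 * Q i j) / 2 := fun j => rfl
      simp_rw [h0]
      rw [← Finset.sum_div]
      congr 1
      rw [Finset.sum_sub_distrib, Finset.sum_add_distrib, Finset.sum_const, Finset.card_univ,
        Fintype.card_fin, nsmul_eq_mul]
      congr 1
      exact (Finset.mul_sum _ _ _).symm
    simp_rw [h]
    rw [← Finset.sum_div]
    have h2 : ∑ i, ((n:ℝ) * P i + ∑ j, P j - 2 * ∑ j, Q i j)
        = (n:ℝ) * ∑ i, P i + (n:ℝ) * ∑ j, P j - 2 * ∑ i, ∑ j, Q i j := by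
      rw [Finset.sum_sub_distrib, Finset.sum_add_distrib, ← Finset.mul_sum, ← Finset.mul_sum,
        Finset.sum_const, Finset.card_univ, Fintype.card_fin, nsmul_eq_mul]
    rw [h2, hPsum, hQsum]
    ring
  -- transfer to sums over Fin (n*n-n)
  set v : Fin (n * n - n) → ℝ := fun i => q (e i).1.1 (e i).1.2 with hv
  have hKm : k * n ≤ n * n - n := by
    calc k * n ≤ (n - 1) * n := Nat.mul_le_mul_right n hk2
      _ = n * n - n := by rw [Nat.sub_mul, one_mul]
  have hK1 : 1 ≤ k * n := by
    have h := Nat.mul_le_mul hk1 (show 1 ≤ n by omega)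
    simpa using h
  have hv0 : ∀ i, 0 ≤ v i := fun i => hq0 _ _
  have hv1 : ∀ i, v i ≤ 1 := fun i => hq1 _ _ (e i).2
  have hfull : ∀ f : Fin n × Fin n → ℝ, (∀ i, f (i, i) = 0) →
      ∑ p ∈ Finset.univ.filter (fun p : Fin n × Fin n => p.1 ≠ p.2), f p
        = ∑ i, ∑ j, f (i, j) := by
    intro f hf
    have hz : ∑ p ∈ Finset.univ.filter (fun p : Fin n × Fin n => ¬ p.1 ≠ p.2), f p = 0 := by
      refine Finset.sum_eq_zero fun p hp => ?_
      have h1 := (Finset.mem_filter.mp hp).2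
      push_neg at h1
      have h2 : p = (p.1, p.1) := Prod.ext rfl h1.symm
      rw [h2]
      exact hf p.1
    have htot := Finset.sum_filter_add_sum_filter_not Finset.univ
      (fun p : Fin n × Fin n => p.1 ≠ p.2) f
    rw [hz, add_zero] at htot
    rw [htot, Fintype.sum_prod_type]
  have hvsum : ∑ i, v i = ((k * n : ℕ) : ℝ) := by
    rw [Fintype.sum_equiv e v (fun p : {p : Fin n × Fin n // p.1 ≠ p.2} => q p.1.1 p.1.2)
      (fun i => rfl)]
    rw [← Finset.sum_subtype (Finset.univ.filter (fun p : Fin n × Fin n => p.1 ≠ p.2))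
      (fun p => by simp) (fun p : Fin n × Fin n => q p.1 p.2)]
    rw [hfull (fun p => q p.1 p.2) (fun i => hqdiag i), hqtotal]
    push_cast
    ring
  have htrans : ∑ i, ω i * v i = ∑ i, ∑ j, A i j * q i j := by
    rw [Fintype.sum_equiv e (fun i => ω i * v i)
      (fun p : {p : Fin n × Fin n // p.1 ≠ p.2} => A p.1.1 p.1.2 * q p.1.1 p.1.2)
      (fun i => by
        show ω i * v i = A (e i).1.1 (e i).1.2 * q (e i).1.1 (e i).1.2
        rw [hω i])]
    rw [← Finset.sum_subtype (Finset.univ.filter (fun p : Fin n × Fin n => p.1 ≠ p.2))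
      (fun p => by simp) (fun p : Fin n × Fin n => A p.1 p.2 * q p.1 p.2)]
    rw [hfull (fun p => A p.1 p.2 * q p.1 p.2) (fun i => by
      show A i i * q i i = 0
      rw [hdiag i]; ring)]
  rw [hSq, ← htrans]
  exact select_bound hK1 hKm ω v hmono hv0 hv1 (by rw [hvsum])
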